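/- In a standard quasi-metric space X,d, the image of X under x ↦ (x,0) is a Gδ subset of B(X,d) with its Scott topology: it equals the intersection of the Scott-open sets U_n = {(x,r) : r < 1/2^n}. -/

import Mathlib

open scoped ENNReal NNReal Classical

/-- A formal ball: a point together with a non-negative real radius. -/
structure FormalBall (X : Type*) where
  center : X
  radius : ℝ≥0

/-- A quasi-metric on `X`: a `[0,∞]`-valued distance with `d x x = 0`, the triangle
inequality, and `d x y = d y x = 0 → x = y`. -/
structure QuasiMetric (X : Type*) where
  d : X → X → ℝ≥0∞
  refl : ∀ x, d x x = 0
  triangle : ∀ x y z, d x z ≤ d x y + d y z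
  separated : ∀ x y, d x y = 0 → d y x = 0 → x = y

/-- The order on formal balls: `(x,r) ≤ (y,s)` iff `d x y ≤ r - s`
(equivalently `s ≤ r` and `d x y ≤ r - s`). -/
def ballLE {X : Type*} (q : QuasiMetric X) (b c : FormalBall X) : Prop :=
  c.radius ≤ b.radius ∧ q.d b.center c.center ≤ ↑(b.radius - c.radius)

/-- The partial order of formal balls `B(X,d)`. -/
def ballOrder {X : Type*} (q : QuasiMetric X) : PartialOrder (FormalBall X) where
  le := ballLE q
  le_refl b := ⟨le_rfl, by simp [ballLE, q.refl]⟩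
  le_trans a b c hab hbc := ⟨hbc.1.trans hab.1, by
    calc q.d a.center c.center ≤ q.d a.center b.center + q.d b.center c.center :=
          q.triangle _ _ _
      _ ≤ ↑(a.radius - b.radius) + ↑(b.radius - c.radius) := add_le_add hab.2 hbc.2
      _ = ↑(a.radius - c.radius) := by
          rw [← ENNReal.coe_add, tsub_add_tsub_cancel hab.1 hbc.1]⟩
  le_antisymm a b hab hba := by
    have hr : b.radius = a.radius := le_antisymm hab.1 hba.1
    have h1 : q.d a.center b.center = 0 := le_antisymm (by simpa [hr] using hab.2) bot_le
    have h2 : q.d b.center a.center = 0 := le_antisymm (by simpa [hr] using hba.2) bot_le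
    have hc := q.separated _ _ h1 h2
    cases a; cases b; simp_all

/-- Standardness: a directed family of formal balls has a supremum iff the family with all
radii uniformly shifted by `s` has one. -/
def Standard {X : Type*} (q : QuasiMetric X) : Prop :=
  letI := ballOrder q
  ∀ S : Set (FormalBall X), S.Nonempty → DirectedOn (· ≤ ·) S → ∀ s : ℝ≥0,
    ((∃ b, IsLUB S b) ↔
      ∃ b, IsLUB ((fun c : FormalBall X => FormalBall.mk c.center (c.radius + s)) '' S) b)

/-- Scott-open: upward closed and inaccessible by suprema of nonempty directed sets. -/
def ScottOpen {α : Type*} [Preorder α] (U : Set α) : Prop :=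
  (∀ a ∈ U, ∀ b, a ≤ b → b ∈ U) ∧
  ∀ S : Set α, S.Nonempty → DirectedOn (· ≤ ·) S → ∀ a, IsLUB S a → a ∈ U → (S ∩ U).Nonempty

/-- in a standard quasi-metric space, the image of `X` under `x ↦ (x,0)`
is a Gδ subset of `B(X,d)`: each `U_n = {(x,r) : r < 1/2^n}` is Scott-open and the image
equals `⋂ n, U_n`. -/
theorem range_zero_ball_Gdelta {X : Type*} (q : QuasiMetric X) (hstd : Standard q) :
    letI := ballOrder q
    (∀ n : ℕ, ScottOpen {b : FormalBall X | b.radius < (1 / 2) ^ n}) ∧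
      Set.range (fun x : X => FormalBall.mk x 0) =
        ⋂ n : ℕ, {b : FormalBall X | b.radius < (1 / 2) ^ n} := by
  letI := ballOrder q
  constructor
  · intro n
    set ε : ℝ≥0 := (1 / 2) ^ n with hε
    constructor
    · intro a ha b hab
      exact lt_of_le_of_lt hab.1 ha
    · intro S hne hdir a hlub ha
      by_contra hemp
      push_neg at hemp
      have hall : ∀ c ∈ S, ε ≤ c.radius := by
        intro c hc
        by_contra h
        push_neg at h
        exact absurd hemp (by simp [Set.eq_empty_iff_forall_notMem]; exact ⟨c, hc, h⟩)
      set f : FormalBall X → FormalBall X := fun c => FormalBall.mk c.center (c.radius - ε)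
      set S' := f '' S with hS'
      have hne' : S'.Nonempty := hne.image f
      have hdir' : DirectedOn (· ≤ ·) S' := by
        rintro _ ⟨c₁, hc₁, rfl⟩ _ ⟨c₂, hc₂, rfl⟩
        obtain ⟨c, hc, h1, h2⟩ := hdir c₁ hc₁ c₂ hc₂
        refine ⟨f c, ⟨c, hc, rfl⟩, ?_, ?_⟩
        · exact ⟨tsub_le_tsub_right h1.1 ε, by
            rw [tsub_tsub_tsub_cancel_right (hall c hc)]; exact h1.2⟩
        · exact ⟨tsub_le_tsub_right h2.1 ε, by
            rw [tsub_tsub_tsub_cancel_right (hall c hc)]; exact h2.2⟩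
      have himg : (fun c : FormalBall X => FormalBall.mk c.center (c.radius + ε)) '' S' = S := by
        rw [hS', Set.image_image]
        have : ∀ c ∈ S, FormalBall.mk (f c).center ((f c).radius + ε) = c := by
          intro c hc
          simp only [f, tsub_add_cancel_of_le (hall c hc)]
        calc (fun c => FormalBall.mk (f c).center ((f c).radius + ε)) '' S
            = id '' S := Set.image_congr this
          _ = S := Set.image_id S
      have hex : ∃ b, IsLUB S' b := by
        rw [hstd S' hne' hdir' ε, himg]
        exact ⟨a, hlub⟩
      obtain ⟨b, hb⟩ := hex
      have hub : FormalBall.mk b.center (b.radius + ε) ∈ upperBounds S := by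
        intro c hc
        have hcb : f c ≤ b := hb.1 ⟨c, hc, rfl⟩
        refine ⟨?_, ?_⟩
        · calc b.radius + ε ≤ (c.radius - ε) + ε := add_le_add_left hcb.1 ε
            _ = c.radius := tsub_add_cancel_of_le (hall c hc)
        · have : c.radius - (b.radius + ε) = c.radius - ε - b.radius := by
            rw [tsub_tsub, add_comm]
          rw [this]
          exact hcb.2
      have : b.radius + ε ≤ a.radius := (hlub.2 hub).1
      have : ε ≤ a.radius := le_trans le_add_self this
      exact absurd ha (not_lt.mpr this)
  · ext b
    simp only [Set.mem_range, Set.mem_iInter, Set.mem_setOf_eq]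
    constructor
    · rintro ⟨x, rfl⟩ n
      exact pow_pos (by norm_num) n
    · intro h
      have hb0 : b.radius = 0 := by
        by_contra h0
        have hpos : 0 < b.radius := pos_iff_ne_zero.mpr h0
        obtain ⟨n, hn⟩ := exists_pow_lt_of_lt_one hpos (by rw [← NNReal.coe_lt_coe]; norm_num : (1/2 : ℝ≥0) < 1)
        exact absurd (h n) (not_lt.mpr hn.le)
      exact ⟨b.center, by cases b; simp_all⟩
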